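/- Convolution theorem for the photography transform: for f, g ∈ S(ℝ²ⁿ) and any α ∈ ℝ \ {0}, P_α(f * g) = (P_α f) * (P_α g), where on the left the convolution is taken over ℝ²ⁿ and on the right over ℝⁿ. -/

import Mathlib

open MeasureTheory SchwartzMap FourierTransform Real

noncomputable section

abbrev En (n : ℕ) := EuclideanSpace ℝ (Fin n)
abbrev E2n (n : ℕ) := WithLp 2 (En n × En n)

instance (n : ℕ) : MeasureSpace (E2n n) :=
  ⟨Measure.map (WithLp.toLp 2) (volume : Measure (En n × En n))⟩
instance (n : ℕ) : BorelSpace (E2n n) := WithLp.borelSpace 2 (En n) (En n)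

instance (n : ℕ) : ((volume : Measure (En n)).prod (volume : Measure (En n))).IsAddHaarMeasure :=
  Measure.prod.instIsAddHaarMeasure _ _

instance (n : ℕ) : (volume : Measure (En n × En n)).IsAddHaarMeasure := by
  rw [Measure.volume_eq_prod]; infer_instance

instance (n : ℕ) : (volume : Measure (E2n n)).IsAddHaarMeasure := by
  have := (WithLp.prodContinuousLinearEquiv 2 ℝ (En n) (En n)).symm.isAddHaarMeasure_map
    (volume : Measure (En n × En n))
  exact this

instance (n : ℕ) : ((volume : Measure (En n)).prod (volume : Measure (En n))).HasTemperateGrowth :=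
  inferInstance

instance (n : ℕ) : (volume : Measure (E2n n)).HasTemperateGrowth := inferInstance

/-- The photography transform `P`. -/
def photo (n : ℕ) (f : E2n n → ℂ) (α : ℝ) (x : En n) : ℂ :=
  (|α| ^ n)⁻¹ • ∫ u : En n, f (WithLp.toLp 2 (α⁻¹ • x + (1 - α⁻¹) • u, u))

namespace PhotoAux

lemma integrable_E2n_iff {n : ℕ} {X : Type*} [NormedAddCommGroup X] {F : E2n n → X} :
    Integrable F (volume : Measure (E2n n)) ↔
      Integrable (fun q : En n × En n => F (WithLp.toLp 2 q))
        ((volume : Measure (En n)).prod volume) :=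
  (MeasurableEquiv.toLp 2 (En n × En n)).measurableEmbedding.integrable_map_iff

lemma integral_E2n {n : ℕ} {X : Type*} [NormedAddCommGroup X] [NormedSpace ℝ X]
    (F : E2n n → X) :
    ∫ w : E2n n, F w = ∫ q : En n × En n, F (WithLp.toLp 2 q)
      ∂((volume : Measure (En n)).prod volume) :=
  (MeasurableEquiv.toLp 2 (En n × En n)).measurableEmbedding.integral_map _

/-- Integrability is preserved by composing with a linear equivalence, on a finite-dimensional
real vector space with an additive Haar measure. -/
lemma integrable_comp_linearEquiv {E : Type*} [NormedAddCommGroup E] [NormedSpace ℝ E]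
    [MeasurableSpace E] [BorelSpace E] [FiniteDimensional ℝ E]
    (μ : Measure E) [μ.IsAddHaarMeasure] {X : Type*} [NormedAddCommGroup X]
    (e : E ≃ₗ[ℝ] E) {F : E → X} (hF : Integrable F μ) :
    Integrable (fun x => F (e x)) μ := by
  have hemb : MeasurableEmbedding (⇑e) :=
    e.toContinuousLinearEquiv.toHomeomorph.measurableEmbedding
  have hmap : Integrable F (μ.map ⇑e) := by
    rw [Measure.isAddLeftInvariant_eq_smul (μ.map ⇑e) μ, ENNReal.smul_def]
    exact hF.smul_measure ENNReal.coe_ne_top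
  exact hemb.integrable_map_iff.1 hmap

/-- The shear-and-scale map `(y, w) ↦ (A•y + B•w, w)` as a linear equivalence. -/
def shearScaleEquiv (n : ℕ) (A B : ℝ) (hA : A ≠ 0) : (En n × En n) ≃ₗ[ℝ] En n × En n where
  toFun p := (A • p.1 + B • p.2, p.2)
  invFun q := (A⁻¹ • (q.1 - B • q.2), q.2)
  map_add' p q := by
    refine Prod.ext ?_ rfl
    show A • (p.1 + q.1) + B • (p.2 + q.2) = (A • p.1 + B • p.2) + (A • q.1 + B • q.2)
    module
  map_smul' c p := by
    refine Prod.ext ?_ rfl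
    show A • (c • p.1) + B • (c • p.2) = c • (A • p.1 + B • p.2)
    module
  left_inv p := by
    refine Prod.ext ?_ rfl
    show A⁻¹ • (A • p.1 + B • p.2 - B • p.2) = p.1
    rw [add_sub_cancel_right, smul_smul, inv_mul_cancel₀ hA, one_smul]
  right_inv q := by
    refine Prod.ext ?_ rfl
    show A • (A⁻¹ • (q.1 - B • q.2)) + B • q.2 = q.1
    rw [smul_smul, mul_inv_cancel₀ hA, one_smul, sub_add_cancel]

lemma integrable_comp_shear {n : ℕ} (g : 𝓢(E2n n, ℂ)) {A : ℝ} (hA : A ≠ 0) (B : ℝ) :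
    Integrable (fun p : En n × En n => g (WithLp.toLp 2 (A • p.1 + B • p.2, p.2)))
      ((volume : Measure (En n)).prod volume) := by
  have hg0 : Integrable (⇑g) (volume : Measure (E2n n)) := g.integrable
  have hg : Integrable (fun q : En n × En n => g (WithLp.toLp 2 (q.1, q.2)))
      ((volume : Measure (En n)).prod volume) := integrable_E2n_iff.1 hg0
  exact integrable_comp_linearEquiv _ (shearScaleEquiv n A B hA) hg

lemma cont_pair {n : ℕ} {X : Type*} [TopologicalSpace X] {φ₁ φ₂ : X → En n}
    (h1 : Continuous φ₁) (h2 : Continuous φ₂) :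
    Continuous (fun x => (WithLp.toLp 2 (φ₁ x, φ₂ x))) :=
  (WithLp.prod_continuous_toLp 2 (En n) (En n)).comp (h1.prodMk h2)

/-- Schwartz decay in the second variable only. -/
lemma schwartz_decay {n : ℕ} (f : 𝓢(E2n n, ℂ)) :
    ∃ C : ℝ, 0 ≤ C ∧ ∀ a b : En n, ‖f (WithLp.toLp 2 (a, b))‖ ≤ C * (1 + ‖b‖) ^ (-((n : ℝ) + 1)) := by
  refine ⟨2 ^ (n + 1) * (Finset.Iic ((n + 1 : ℕ), (0 : ℕ))).sup
      (fun m' => SchwartzMap.seminorm ℝ m'.1 m'.2) f,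
    mul_nonneg (by positivity) (apply_nonneg _ f), fun a b => ?_⟩
  have h := one_add_le_sup_seminorm_apply (𝕜 := ℝ) (m := ((n + 1 : ℕ), (0 : ℕ)))
    (k := n + 1) (n := 0) le_rfl le_rfl f (WithLp.toLp 2 (a, b))
  rw [norm_iteratedFDeriv_zero] at h
  set z : E2n n := (WithLp.toLp 2 (a, b)) with hz
  have h2 : ‖z‖ ^ 2 = ‖a‖ ^ 2 + ‖b‖ ^ 2 := WithLp.prod_norm_sq_eq_of_L2 z
  have hb : ‖b‖ ≤ ‖z‖ := by nlinarith [norm_nonneg z, norm_nonneg b, sq_nonneg ‖a‖]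
  have hpow : (1 + ‖b‖) ^ (n + 1) ≤ (1 + ‖z‖) ^ (n + 1) :=
    pow_le_pow_left₀ (by positivity) (by linarith) _
  have hfb := le_trans (mul_le_mul_of_nonneg_right hpow (norm_nonneg (f z))) h
  have hpos : (0 : ℝ) < (1 + ‖b‖) ^ (n + 1) := by positivity
  have hrw : (1 + ‖b‖) ^ (-((n : ℝ) + 1)) = ((1 + ‖b‖) ^ (n + 1))⁻¹ := by
    rw [show (-((n : ℝ) + 1)) = -((n + 1 : ℕ) : ℝ) by push_cast; ring,
      Real.rpow_neg (by positivity), Real.rpow_natCast]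
  rw [hrw, ← div_eq_mul_inv, le_div_iff₀ hpos, mul_comm]
  exact hfb

lemma cov1 {n : ℕ} {α : ℝ} (hα : α ≠ 0) (h : En n → ℂ) (t : En n) :
    ∫ w₁ : En n, h w₁ = (|α| ^ n)⁻¹ • ∫ y : En n, h (α⁻¹ • y + t) := by
  have h2 : ∫ s : En n, h (s + t) = ∫ w₁, h w₁ := integral_add_right_eq_self h t
  have h1 : ∫ y : En n, h (α⁻¹ • y + t) = (|α| ^ n : ℝ) • ∫ w₁, h w₁ := by
    have h3 := Measure.integral_comp_smul (volume : Measure (En n)) (fun s => h (s + t)) α⁻¹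
    rw [h3, h2]
    congr 1
    rw [finrank_euclideanSpace_fin, inv_pow, inv_inv, abs_pow]
  rw [h1, smul_smul, inv_mul_cancel₀ (pow_ne_zero n (abs_ne_zero.2 hα)), one_smul]

/-- The inner-slice integrability of `x ↦ (1+‖x‖)^{-(n+1)}`. -/
lemma integrable_D (n : ℕ) :
    Integrable (fun b : En n => (1 + ‖b‖) ^ (-((n : ℝ) + 1))) (volume : Measure (En n)) := by
  apply integrable_one_add_norm
  rw [finrank_euclideanSpace_fin]
  linarith

/-- Identity reinterpretation of a pair as an element of the `L²` product. -/
abbrev toL2 {n : ℕ} (p : En n × En n) : E2n n := WithLp.toLp 2 p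

/-- The key integrand appearing after the change of variables. -/
def Phi (n : ℕ) (f g : 𝓢(E2n n, ℂ)) (α : ℝ) (xbar : En n) (u : En n) (p : En n × En n) : ℂ :=
  f (WithLp.toLp 2 (α⁻¹ • (xbar - p.1) + (1 - α⁻¹) • (u - p.2), u - p.2)) *
  g (WithLp.toLp 2 (α⁻¹ • p.1 + (1 - α⁻¹) • p.2, p.2))

section Main

variable {n : ℕ} (f g : 𝓢(E2n n, ℂ)) {α : ℝ} (xbar : En n)

lemma phi_cont (hα : α ≠ 0) : Continuous (Function.uncurry (Phi n f g α xbar)) := by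
  have h : Continuous (fun q : En n × (En n × En n) =>
      f (WithLp.toLp 2 (α⁻¹ • (xbar - q.2.1) + (1 - α⁻¹) • (q.1 - q.2.2), q.1 - q.2.2)) *
      g (WithLp.toLp 2 (α⁻¹ • q.2.1 + (1 - α⁻¹) • q.2.2, q.2.2))) :=
    Continuous.mul (f.continuous.comp (cont_pair (by fun_prop) (by fun_prop)))
      (g.continuous.comp (cont_pair (by fun_prop) (by fun_prop)))
  exact h

lemma phi_O2 (hα : α ≠ 0) (u : En n) :
    Integrable (fun p : En n × En n => Phi n f g α xbar u p)
      ((volume : Measure (En n)).prod volume) := by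
  have hA : (α⁻¹ : ℝ) ≠ 0 := inv_ne_zero hα
  have hQint := integrable_comp_shear g hA (1 - α⁻¹)
  refine Integrable.mono' (hQint.norm.const_mul ((SchwartzMap.seminorm ℝ 0 0) f)) ?_
    (Filter.Eventually.of_forall fun p => ?_)
  · exact ((phi_cont f g xbar hα).comp (continuous_const.prodMk continuous_id)).aestronglyMeasurable
  · show ‖Phi n f g α xbar u p‖ ≤ _
    rw [Phi, norm_mul]
    exact mul_le_mul_of_nonneg_right (norm_le_seminorm ℝ f _) (norm_nonneg _)

lemma phi_J2 (hα : α ≠ 0) :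
    Integrable (Function.uncurry (Phi n f g α xbar))
      ((volume : Measure (En n)).prod (volume : Measure (En n × En n))) := by
  have hA : (α⁻¹ : ℝ) ≠ 0 := inv_ne_zero hα
  have hQint := integrable_comp_shear g hA (1 - α⁻¹)
  obtain ⟨Cf, hCf0, hCf⟩ := schwartz_decay f
  have hD := integrable_D n
  have hcont := phi_cont f g xbar hα
  have hASM : AEStronglyMeasurable (Function.uncurry (Phi n f g α xbar))
      ((volume : Measure (En n)).prod (volume : Measure (En n × En n))) :=
    hcont.aestronglyMeasurable
  rw [integrable_prod_iff' hASM]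
  constructor
  · refine Filter.Eventually.of_forall fun p => ?_
    have hDt : Integrable (fun u : En n => (1 + ‖u - p.2‖) ^ (-((n : ℝ) + 1)))
        (volume : Measure (En n)) := by
      have hmp := measurePreserving_sub_right (volume : Measure (En n)) p.2
      exact (hmp.integrable_comp hD.aestronglyMeasurable).2 hD
    refine Integrable.mono'
      (hDt.const_mul (Cf * ‖g (WithLp.toLp 2 (α⁻¹ • p.1 + (1 - α⁻¹) • p.2, p.2))‖)) ?_
      (Filter.Eventually.of_forall fun u => ?_)
    · exact (hcont.comp (continuous_id.prodMk continuous_const)).aestronglyMeasurable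
    · show ‖Phi n f g α xbar u p‖ ≤ _
      rw [Phi, norm_mul]
      refine le_trans (mul_le_mul_of_nonneg_right (hCf _ _) (norm_nonneg _)) (le_of_eq ?_)
      ring
  · have hASM2 : AEStronglyMeasurable
        (fun p : En n × En n => ∫ u, ‖Function.uncurry (Phi n f g α xbar) (u, p)‖)
        (volume : Measure (En n × En n)) := by
      have hcsw : Continuous (fun q : (En n × En n) × En n =>
          ‖Function.uncurry (Phi n f g α xbar) (q.2, q.1)‖) :=
        (hcont.comp (continuous_snd.prodMk continuous_fst)).norm
      exact (hcsw.aestronglyMeasurable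
        (μ := (volume : Measure (En n × En n)).prod (volume : Measure (En n)))).integral_prod_right'
    refine Integrable.mono'
      (hQint.norm.const_mul (Cf * ∫ b : En n, (1 + ‖b‖) ^ (-((n : ℝ) + 1)))) hASM2
      (Filter.Eventually.of_forall fun p => ?_)
    rw [Real.norm_of_nonneg (integral_nonneg fun u => norm_nonneg _)]
    have h1 : (∫ u, ‖Function.uncurry (Phi n f g α xbar) (u, p)‖)
        = (∫ u, ‖f (WithLp.toLp 2 (α⁻¹ • (xbar - p.1) + (1 - α⁻¹) • (u - p.2), u - p.2))‖) *
            ‖g (WithLp.toLp 2 (α⁻¹ • p.1 + (1 - α⁻¹) • p.2, p.2))‖ := by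
      simp only [Function.uncurry, Phi, norm_mul]
      exact integral_mul_const _ _
    rw [h1]
    have h2 : (∫ u, ‖f (WithLp.toLp 2 (α⁻¹ • (xbar - p.1) + (1 - α⁻¹) • (u - p.2), u - p.2))‖)
        = ∫ u, ‖f (WithLp.toLp 2 (α⁻¹ • (xbar - p.1) + (1 - α⁻¹) • u, u))‖ :=
      integral_sub_right_eq_self
        (fun t => ‖f (WithLp.toLp 2 (α⁻¹ • (xbar - p.1) + (1 - α⁻¹) • t, t))‖) p.2
    rw [h2]
    have hsliceInt : Integrable
        (fun u : En n => f (WithLp.toLp 2 (α⁻¹ • (xbar - p.1) + (1 - α⁻¹) • u, u)))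
        (volume : Measure (En n)) := by
      refine Integrable.mono' (hD.const_mul Cf) ?_ (Filter.Eventually.of_forall fun u => ?_)
      · exact (f.continuous.comp (cont_pair (by fun_prop) (by fun_prop))).aestronglyMeasurable
      · exact hCf _ u
    have h3 : (∫ u, ‖f (WithLp.toLp 2 (α⁻¹ • (xbar - p.1) + (1 - α⁻¹) • u, u))‖)
        ≤ Cf * ∫ b : En n, (1 + ‖b‖) ^ (-((n : ℝ) + 1)) := by
      refine le_trans (integral_mono hsliceInt.norm (hD.const_mul Cf) fun u => hCf _ u) ?_
      exact le_of_eq (integral_const_mul _ _)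
    exact le_trans (mul_le_mul_of_nonneg_right h3 (norm_nonneg _)) (le_of_eq (by ring))

lemma key_inner (hα : α ≠ 0) (z : E2n n) :
    (∫ w : E2n n, f (z - w) * g w)
      = (|α| ^ n)⁻¹ • ∫ w₂ : En n, ∫ y : En n,
          f (z - toL2 (α⁻¹ • y + (1 - α⁻¹) • w₂, w₂)) *
          g (toL2 (α⁻¹ • y + (1 - α⁻¹) • w₂, w₂)) := by
  have hg0 : Integrable (⇑g) (volume : Measure (E2n n)) := g.integrable
  have hgpair : Integrable (fun w : En n × En n => g (toL2 (w.1, w.2)))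
      ((volume : Measure (En n)).prod volume) := integrable_E2n_iff.1 hg0
  have hint : Integrable (fun w : En n × En n =>
      f (z - toL2 (w.1, w.2)) * g (toL2 (w.1, w.2)))
      ((volume : Measure (En n)).prod volume) := by
    refine Integrable.mono' (hgpair.norm.const_mul ((SchwartzMap.seminorm ℝ 0 0) f)) ?_
      (Filter.Eventually.of_forall fun w => ?_)
    · have hzc : Continuous (fun w : En n × En n => z - toL2 (w.1, w.2)) :=
        continuous_const.sub (cont_pair continuous_fst continuous_snd)
      exact ((f.continuous.comp hzc).mul
        (g.continuous.comp (cont_pair continuous_fst continuous_snd))).aestronglyMeasurable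
    · rw [norm_mul]
      exact mul_le_mul_of_nonneg_right (norm_le_seminorm ℝ f _) (norm_nonneg _)
  calc (∫ w : E2n n, f (z - w) * g w)
      = ∫ w : En n × En n, f (z - toL2 (w.1, w.2)) * g (toL2 (w.1, w.2))
          ∂((volume : Measure (En n)).prod volume) := integral_E2n _
    _ = ∫ w₂ : En n, ∫ w₁ : En n, f (z - toL2 (w₁, w₂)) * g (toL2 (w₁, w₂)) :=
        integral_prod_symm _ hint
    _ = ∫ w₂ : En n, (|α| ^ n)⁻¹ • ∫ y : En n,
          f (z - toL2 (α⁻¹ • y + (1 - α⁻¹) • w₂, w₂)) *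
          g (toL2 (α⁻¹ • y + (1 - α⁻¹) • w₂, w₂)) := by
        refine integral_congr_ae (Filter.Eventually.of_forall fun w₂ => ?_)
        exact cov1 hα (fun w₁ => f (z - toL2 (w₁, w₂)) * g (toL2 (w₁, w₂)))
          ((1 - α⁻¹) • w₂)
    _ = (|α| ^ n)⁻¹ • ∫ w₂ : En n, ∫ y : En n,
          f (z - toL2 (α⁻¹ • y + (1 - α⁻¹) • w₂, w₂)) *
          g (toL2 (α⁻¹ • y + (1 - α⁻¹) • w₂, w₂)) := integral_smul _ _

lemma key_inner' (hα : α ≠ 0) (u : En n) :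
    (∫ w : E2n n, f (toL2 (α⁻¹ • xbar + (1 - α⁻¹) • u, u) - w) * g w)
      = (|α| ^ n)⁻¹ • ∫ w₂ : En n, ∫ y : En n, Phi n f g α xbar u (y, w₂) := by
  refine (key_inner f g hα (toL2 (α⁻¹ • xbar + (1 - α⁻¹) • u, u))).trans ?_
  congr 1
  refine integral_congr_ae (Filter.Eventually.of_forall fun w₂ => ?_)
  refine integral_congr_ae (Filter.Eventually.of_forall fun y => ?_)
  have hsub : toL2 (α⁻¹ • xbar + (1 - α⁻¹) • u, u)
        - toL2 (α⁻¹ • y + (1 - α⁻¹) • w₂, w₂)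
      = toL2 (α⁻¹ • (xbar - y) + (1 - α⁻¹) • (u - w₂), u - w₂) := by
    refine (WithLp.toLp_sub 2 _ _).symm.trans (congrArg (WithLp.toLp 2) (Prod.ext ?_ rfl))
    show (α⁻¹ • xbar + (1 - α⁻¹) • u) - (α⁻¹ • y + (1 - α⁻¹) • w₂)
        = α⁻¹ • (xbar - y) + (1 - α⁻¹) • (u - w₂)
    module
  show f (toL2 (α⁻¹ • xbar + (1 - α⁻¹) • u, u) - toL2 (α⁻¹ • y + (1 - α⁻¹) • w₂, w₂)) *
      g (toL2 (α⁻¹ • y + (1 - α⁻¹) • w₂, w₂)) = Phi n f g α xbar u (y, w₂)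
  rw [hsub]
  rfl

end Main

end PhotoAux

/-- convolution theorem for the photography transform. -/
theorem photography_convolution (n : ℕ) (f g : 𝓢(E2n n, ℂ)) (α : ℝ) (hα : α ≠ 0)
    (xbar : En n) :
    photo n (fun z => ∫ w : E2n n, f (z - w) * g w) α xbar =
      ∫ y : En n, photo n (⇑f) α (xbar - y) * photo n (⇑g) α y := by
  calc photo n (fun z => ∫ w : E2n n, f (z - w) * g w) α xbar
      = (|α| ^ n)⁻¹ • ∫ u : En n, (|α| ^ n)⁻¹ •
          ∫ w₂ : En n, ∫ y : En n, PhotoAux.Phi n f g α xbar u (y, w₂) := by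
        simp only [photo]
        congr 1
        refine integral_congr_ae (Filter.Eventually.of_forall fun u => ?_)
        exact PhotoAux.key_inner' f g xbar hα u
    _ = (|α| ^ n)⁻¹ • ((|α| ^ n)⁻¹ •
          ∫ u : En n, ∫ w₂ : En n, ∫ y : En n, PhotoAux.Phi n f g α xbar u (y, w₂)) := by
        rw [integral_smul]
    _ = (|α| ^ n)⁻¹ • ((|α| ^ n)⁻¹ •
          ∫ u : En n, ∫ p : En n × En n, PhotoAux.Phi n f g α xbar u p) := by
        congr 2
        refine integral_congr_ae (Filter.Eventually.of_forall fun u => ?_)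
        exact (integral_prod_symm _ (PhotoAux.phi_O2 f g xbar hα u)).symm
    _ = (|α| ^ n)⁻¹ • ((|α| ^ n)⁻¹ •
          ∫ p : En n × En n, ∫ u : En n, PhotoAux.Phi n f g α xbar u p) := by
        congr 2
        exact integral_integral_swap (PhotoAux.phi_J2 f g xbar hα)
    _ = (|α| ^ n)⁻¹ • ((|α| ^ n)⁻¹ •
          ∫ y : En n, ∫ w₂ : En n, ∫ u : En n, PhotoAux.Phi n f g α xbar u (y, w₂)) := by
        congr 2
        exact integral_prod (fun p : En n × En n => ∫ u : En n, PhotoAux.Phi n f g α xbar u p)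
          ((PhotoAux.phi_J2 f g xbar hα).integral_prod_right)
    _ = (|α| ^ n)⁻¹ • ((|α| ^ n)⁻¹ •
          ∫ y : En n,
            (∫ u : En n, f (WithLp.toLp 2 (α⁻¹ • (xbar - y) + (1 - α⁻¹) • u, u))) *
            ∫ w₂ : En n, g (WithLp.toLp 2 (α⁻¹ • y + (1 - α⁻¹) • w₂, w₂))) := by
        congr 2
        refine integral_congr_ae (Filter.Eventually.of_forall fun y => ?_)
        calc (∫ w₂ : En n, ∫ u : En n, PhotoAux.Phi n f g α xbar u (y, w₂))
            = ∫ w₂ : En n,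
                (∫ u : En n, f (WithLp.toLp 2 (α⁻¹ • (xbar - y) + (1 - α⁻¹) • u, u))) *
                g (WithLp.toLp 2 (α⁻¹ • y + (1 - α⁻¹) • w₂, w₂)) := by
              refine integral_congr_ae (Filter.Eventually.of_forall fun w₂ => ?_)
              calc (∫ u : En n, PhotoAux.Phi n f g α xbar u (y, w₂))
                  = ∫ u : En n,
                      f (WithLp.toLp 2 (α⁻¹ • (xbar - y) + (1 - α⁻¹) • (u - w₂), u - w₂)) *
                      g (WithLp.toLp 2 (α⁻¹ • y + (1 - α⁻¹) • w₂, w₂)) := by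
                    simp only [PhotoAux.Phi]
                _ = (∫ u : En n,
                      f (WithLp.toLp 2 (α⁻¹ • (xbar - y) + (1 - α⁻¹) • (u - w₂), u - w₂))) *
                    g (WithLp.toLp 2 (α⁻¹ • y + (1 - α⁻¹) • w₂, w₂)) := integral_mul_const _ _
                _ = (∫ u : En n, f (WithLp.toLp 2 (α⁻¹ • (xbar - y) + (1 - α⁻¹) • u, u))) *
                    g (WithLp.toLp 2 (α⁻¹ • y + (1 - α⁻¹) • w₂, w₂)) := by
                    congr 1
                    exact integral_sub_right_eq_self
                      (fun t => f (WithLp.toLp 2 (α⁻¹ • (xbar - y) + (1 - α⁻¹) • t, t))) w₂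
          _ = (∫ u : En n, f (WithLp.toLp 2 (α⁻¹ • (xbar - y) + (1 - α⁻¹) • u, u))) *
              ∫ w₂ : En n, g (WithLp.toLp 2 (α⁻¹ • y + (1 - α⁻¹) • w₂, w₂)) :=
            integral_const_mul _ _
    _ = ∫ y : En n, photo n (⇑f) α (xbar - y) * photo n (⇑g) α y := by
        simp only [photo, smul_mul_assoc, mul_smul_comm, integral_smul]
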